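/- Let ℰ be a symmetric exponential random variable with variance 1 (density 2^{-1/2} exp(−√2 |x|)). Then for all real numbers a, b and every real p ≥ 2: E|aℰ + b|^p = |b|^p + (p(p−1)/2) a^2 E|aℰ + b|^{p−2}. -/

import Mathlib

open MeasureTheory ProbabilityTheory Real Filter Set
open scoped ENNReal Topology

/-- The law of a symmetric exponential random variable with variance 1:
density `2^{-1/2} exp(-√2 |x|)` with respect to Lebesgue measure. -/
noncomputable def symExpLaw : Measure ℝ :=
  volume.withDensity fun x =>
    ENNReal.ofReal ((Real.sqrt 2)⁻¹ * Real.exp (-(Real.sqrt 2 * |x|)))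

namespace Stmt8Aux

lemma sqrt2_pos : 0 < Real.sqrt 2 := Real.sqrt_pos.mpr (by norm_num)
lemma sqrt2_sq : Real.sqrt 2 * Real.sqrt 2 = 2 := Real.mul_self_sqrt (by norm_num)
lemma one_lt_sqrt2 : 1 < Real.sqrt 2 := by
  rw [show (1:ℝ) = Real.sqrt 1 by simp]
  exact Real.sqrt_lt_sqrt (by norm_num) (by norm_num)

lemma hasDerivAt_abs_rpow {p : ℝ} (hp : 2 ≤ p) (t : ℝ) :
    HasDerivAt (fun s : ℝ => |s| ^ p) (p * t * |t| ^ (p - 2)) t := by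
  rcases lt_trichotomy t 0 with ht | rfl | ht
  · have h1 : HasDerivAt (fun s : ℝ => (-s) ^ p) (p * (-t) ^ (p - 1) * (-1)) t :=
      (Real.hasDerivAt_rpow_const (Or.inl (by linarith : -t ≠ 0))).comp t (hasDerivAt_neg t)
    have h2 : (fun s : ℝ => |s| ^ p) =ᶠ[nhds t] fun s : ℝ => (-s) ^ p := by
      filter_upwards [Iio_mem_nhds ht] with s hs
      rw [abs_of_neg hs]
    have h3 : p * (-t) ^ (p - 1) * (-1) = p * t * |t| ^ (p - 2) := by
      rw [abs_of_neg ht, show p - 1 = (p - 2) + 1 by ring,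
        Real.rpow_add_one (by linarith : -t ≠ 0)]
      ring
    exact h3 ▸ h1.congr_of_eventuallyEq h2
  · have h0 : p * (0:ℝ) * |(0:ℝ)| ^ (p - 2) = 0 := by ring
    rw [h0, hasDerivAt_iff_tendsto_slope]
    apply squeeze_zero_norm' (a := fun s : ℝ => |s| ^ (p - 1))
    · filter_upwards [self_mem_nhdsWithin] with s hs
      have hs' : s ≠ 0 := hs
      have h5 : slope (fun s : ℝ => |s| ^ p) 0 s = s⁻¹ * |s| ^ p := by
        simp [slope, Real.zero_rpow (by linarith : p ≠ 0)]
      rw [h5, Real.norm_eq_abs, abs_mul, abs_inv,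
        abs_of_nonneg (Real.rpow_nonneg (abs_nonneg s) p),
        Real.rpow_sub (abs_pos.mpr hs'), Real.rpow_one, div_eq_inv_mul]
    · have hcont : ContinuousAt (fun s : ℝ => |s| ^ (p - 1)) 0 :=
        (Real.continuousAt_rpow_const _ _ (Or.inr (by linarith))).comp
          continuous_abs.continuousAt
      have := hcont.tendsto
      simp only [abs_zero, Real.zero_rpow (by linarith : p - 1 ≠ 0)] at this
      exact tendsto_nhdsWithin_of_tendsto_nhds this
  · have h1 : HasDerivAt (fun s : ℝ => s ^ p) (p * t ^ (p - 1)) t :=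
      Real.hasDerivAt_rpow_const (Or.inl ht.ne')
    have h2 : (fun s : ℝ => |s| ^ p) =ᶠ[nhds t] fun s : ℝ => s ^ p := by
      filter_upwards [Ioi_mem_nhds ht] with s hs
      rw [abs_of_pos hs]
    have h3 : p * t ^ (p - 1) = p * t * |t| ^ (p - 2) := by
      rw [abs_of_pos ht, show p - 1 = (p - 2) + 1 by ring, Real.rpow_add_one ht.ne']
      ring
    exact h3 ▸ h1.congr_of_eventuallyEq h2

lemma hasDerivAt_id_mul_abs_rpow {p : ℝ} (hp : 2 ≤ p) (t : ℝ) :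
    HasDerivAt (fun s : ℝ => s * |s| ^ (p - 2)) ((p - 1) * |t| ^ (p - 2)) t := by
  rcases lt_trichotomy t 0 with ht | rfl | ht
  · have h1 : HasDerivAt (fun s : ℝ => -((-s) ^ (p - 1)))
        (-((p - 1) * (-t) ^ (p - 1 - 1) * (-1))) t :=
      (((Real.hasDerivAt_rpow_const (Or.inl (by linarith : -t ≠ 0))).comp t
        (hasDerivAt_neg t))).neg
    have h2 : (fun s : ℝ => s * |s| ^ (p - 2)) =ᶠ[nhds t] fun s : ℝ => -((-s) ^ (p - 1)) := by
      filter_upwards [Iio_mem_nhds ht] with s hs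
      rw [abs_of_neg hs, show p - 1 = (p - 2) + 1 by ring,
        Real.rpow_add_one (neg_pos.mpr hs).ne']
      ring
    have h3 : -((p - 1) * (-t) ^ (p - 1 - 1) * (-1)) = (p - 1) * |t| ^ (p - 2) := by
      rw [abs_of_neg ht, show p - 1 - 1 = p - 2 by ring]
      ring
    exact h3 ▸ h1.congr_of_eventuallyEq h2
  · rcases eq_or_lt_of_le hp with hp2 | hp2
    · have h2 : (fun s : ℝ => s * |s| ^ (p - 2)) = fun s : ℝ => s := by
        funext s
        rw [← hp2]
        norm_num
      have h3 : (p - 1) * |(0:ℝ)| ^ (p - 2) = 1 := by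
        rw [← hp2]; norm_num
      rw [h2, h3]
      exact hasDerivAt_id 0
    · have h0 : (p - 1) * |(0:ℝ)| ^ (p - 2) = 0 := by
        rw [abs_zero, Real.zero_rpow (by linarith : p - 2 ≠ 0)]; ring
      rw [h0, hasDerivAt_iff_tendsto_slope]
      have hcont : ContinuousAt (fun s : ℝ => |s| ^ (p - 2)) 0 :=
        (Real.continuousAt_rpow_const _ _ (Or.inr (by linarith))).comp
          continuous_abs.continuousAt
      have h4 := hcont.tendsto
      simp only [abs_zero, Real.zero_rpow (by linarith : p - 2 ≠ 0)] at h4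
      refine (tendsto_nhdsWithin_of_tendsto_nhds h4).congr' ?_
      filter_upwards [self_mem_nhdsWithin] with s hs
      have hs' : (s:ℝ) ≠ 0 := hs
      simp only [slope, sub_zero, mul_zero, zero_mul, div_eq_inv_mul, vsub_eq_sub, smul_eq_mul]
      field_simp
  · have h1 : HasDerivAt (fun s : ℝ => s ^ (p - 1)) ((p - 1) * t ^ (p - 1 - 1)) t :=
      Real.hasDerivAt_rpow_const (Or.inl ht.ne')
    have h2 : (fun s : ℝ => s * |s| ^ (p - 2)) =ᶠ[nhds t] fun s : ℝ => s ^ (p - 1) := by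
      filter_upwards [Ioi_mem_nhds ht] with s hs
      rw [abs_of_pos hs, show p - 1 = (p - 2) + 1 by ring, Real.rpow_add_one hs.ne']
      ring
    have h3 : (p - 1) * t ^ (p - 1 - 1) = (p - 1) * |t| ^ (p - 2) := by
      rw [abs_of_pos ht, show p - 1 - 1 = p - 2 by ring]
    exact h3 ▸ h1.congr_of_eventuallyEq h2


lemma tendsto_aux (a b : ℝ) {q c : ℝ} (hq : 0 ≤ q) (hc : 0 < c) :
    Tendsto (fun x : ℝ => |a * x + b| ^ q * Real.exp (-(c * x))) atTop (𝓝 0) := by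
  apply squeeze_zero_norm' (a := fun x : ℝ => (|a| + |b|) ^ q * (x ^ q * Real.exp (-(c * x))))
  · filter_upwards [eventually_ge_atTop (1:ℝ)] with x hx
    have hx0 : 0 < x := lt_of_lt_of_le one_pos hx
    have h1 : |a * x + b| ≤ (|a| + |b|) * x := by
      calc |a * x + b| ≤ |a * x| + |b| := abs_add_le _ _
        _ = |a| * x + |b| := by rw [abs_mul, abs_of_pos hx0]
        _ ≤ |a| * x + |b| * x := by nlinarith [abs_nonneg b]
        _ = (|a| + |b|) * x := by ring
    have h2 : |a * x + b| ^ q ≤ ((|a| + |b|) * x) ^ q :=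
      Real.rpow_le_rpow (abs_nonneg _) h1 hq
    rw [Real.mul_rpow (by positivity) hx0.le] at h2
    rw [Real.norm_eq_abs, abs_of_nonneg (by positivity)]
    calc |a * x + b| ^ q * Real.exp (-(c * x))
        ≤ (|a| + |b|) ^ q * x ^ q * Real.exp (-(c * x)) :=
          mul_le_mul_of_nonneg_right h2 (Real.exp_pos _).le
      _ = (|a| + |b|) ^ q * (x ^ q * Real.exp (-(c * x))) := by ring
  · have h := (tendsto_rpow_mul_exp_neg_mul_atTop_nhds_zero q c hc).const_mul
      ((|a| + |b|) ^ q)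
    simpa only [neg_mul, mul_zero] using h

lemma continuous_aux (a b : ℝ) {q : ℝ} (hq : 0 ≤ q) :
    Continuous (fun x : ℝ =>
      |a * x + b| ^ q * ((Real.sqrt 2)⁻¹ * Real.exp (-(Real.sqrt 2 * |x|)))) := by
  apply Continuous.mul
  · exact (((continuous_const.mul continuous_id).add continuous_const).abs).rpow_const
      (fun x => Or.inr hq)
  · exact continuous_const.mul ((continuous_const.mul continuous_abs).neg.rexp)

lemma integrableOn_Ioi_aux (a b : ℝ) {q : ℝ} (hq : 0 ≤ q) :
    IntegrableOn (fun x : ℝ =>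
      |a * x + b| ^ q * ((Real.sqrt 2)⁻¹ * Real.exp (-(Real.sqrt 2 * |x|)))) (Ioi 0) := by
  apply integrable_of_isBigO_exp_neg (b := 1) one_pos
    ((continuous_aux a b hq).continuousOn)
  rw [Asymptotics.isBigO_iff]
  refine ⟨1, ?_⟩
  have hc : 0 < Real.sqrt 2 - 1 := by linarith [one_lt_sqrt2]
  filter_upwards [(tendsto_aux a b hq hc).eventually_le_const one_pos,
      eventually_ge_atTop (0:ℝ)] with x h1 hx0
  rw [Real.norm_eq_abs, Real.norm_eq_abs, abs_of_nonneg (by positivity),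
    abs_of_nonneg (Real.exp_pos _).le, abs_of_nonneg hx0]
  have he : Real.exp (-(Real.sqrt 2 * x))
      = Real.exp (-((Real.sqrt 2 - 1) * x)) * Real.exp (-1 * x) := by
    rw [← Real.exp_add]; ring_nf
  rw [he]
  have h3 : (Real.sqrt 2)⁻¹ ≤ 1 := by
    rw [inv_le_one_iff₀]; right; linarith [one_lt_sqrt2]
  calc |a * x + b| ^ q * ((Real.sqrt 2)⁻¹ *
        (Real.exp (-((Real.sqrt 2 - 1) * x)) * Real.exp (-1 * x)))
      = (Real.sqrt 2)⁻¹ * ((|a * x + b| ^ q * Real.exp (-((Real.sqrt 2 - 1) * x)))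
        * Real.exp (-1 * x)) := by ring
    _ ≤ 1 * (1 * Real.exp (-1 * x)) := by
        apply mul_le_mul h3 _ (by positivity) one_pos.le
        exact mul_le_mul_of_nonneg_right h1 (Real.exp_pos _).le
    _ = 1 * Real.exp (-1 * x) := by ring

lemma integrable_aux (a b : ℝ) {q : ℝ} (hq : 0 ≤ q) :
    Integrable (fun x : ℝ =>
      |a * x + b| ^ q * ((Real.sqrt 2)⁻¹ * Real.exp (-(Real.sqrt 2 * |x|)))) := by
  rw [← integrableOn_univ, ← Iic_union_Ioi (a := (0:ℝ)), integrableOn_union]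
  refine ⟨?_, integrableOn_Ioi_aux a b hq⟩
  have h := integrableOn_Ioi_aux (-a) b hq
  have h2 : IntegrableOn (fun x : ℝ =>
      |(-a) * x + b| ^ q * ((Real.sqrt 2)⁻¹ * Real.exp (-(Real.sqrt 2 * |x|)))) (Ici 0) := by
    rw [integrableOn_Ici_iff_integrableOn_Ioi]; exact h
  rw [← (Measure.measurePreserving_neg (volume : Measure ℝ)).integrableOn_comp_preimage
      (Homeomorph.neg ℝ).measurableEmbedding,
    show Neg.neg ⁻¹' Iic (0:ℝ) = Ici 0 by ext x; simp]
  refine h2.congr_fun (fun x _ => ?_) measurableSet_Ici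
  simp only [Function.comp_apply, abs_neg, neg_mul]
  ring_nf


section Main
variable (a b : ℝ) {p : ℝ}

lemma abs_mul_abs_rpow (hp : 2 ≤ p) (t : ℝ) : |t| * |t| ^ (p - 2) = |t| ^ (p - 1) := by
  rcases eq_or_ne t 0 with rfl | ht
  · simp [Real.zero_rpow (by linarith : p - 1 ≠ 0)]
  · rw [show p - 1 = (p - 2) + 1 by ring, Real.rpow_add_one (abs_ne_zero.mpr ht)]
    ring

lemma hasDerivAt_f0 (hp : 2 ≤ p) (x : ℝ) :
    HasDerivAt (fun x : ℝ => |a * x + b| ^ p)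
      (p * a * ((a * x + b) * |a * x + b| ^ (p - 2))) x := by
  have hl : HasDerivAt (fun x : ℝ => a * x + b) a x := by
    simpa using ((hasDerivAt_id x).const_mul a).add_const b
  have h := (hasDerivAt_abs_rpow hp (a * x + b)).comp x hl
  refine h.congr_deriv ?_
  ring

lemma hasDerivAt_f1 (hp : 2 ≤ p) (x : ℝ) :
    HasDerivAt (fun x : ℝ => p * a * ((a * x + b) * |a * x + b| ^ (p - 2)))
      (p * (p - 1) * a ^ 2 * |a * x + b| ^ (p - 2)) x := by
  have hl : HasDerivAt (fun x : ℝ => a * x + b) a x := by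
    simpa using ((hasDerivAt_id x).const_mul a).add_const b
  have h := ((hasDerivAt_id_mul_abs_rpow hp (a * x + b)).comp x hl).const_mul (p * a)
  refine h.congr_deriv ?_
  ring

lemma hasDerivAt_k (x : ℝ) :
    HasDerivAt (fun x : ℝ => (Real.sqrt 2)⁻¹ * Real.exp (-(Real.sqrt 2 * x)))
      (-Real.exp (-(Real.sqrt 2 * x))) x := by
  have h1 : HasDerivAt (fun x : ℝ => -(Real.sqrt 2 * x)) (-Real.sqrt 2) x := by
    exact (((hasDerivAt_id x).const_mul (Real.sqrt 2)).neg).congr_deriv (by ring)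
  have h := ((Real.hasDerivAt_exp (-(Real.sqrt 2 * x))).comp x h1).const_mul
    (Real.sqrt 2)⁻¹
  refine h.congr_deriv ?_
  have h0 : Real.sqrt 2 ≠ 0 := ne_of_gt sqrt2_pos
  field_simp

lemma hasDerivAt_kneg (x : ℝ) :
    HasDerivAt (fun x : ℝ => (Real.sqrt 2)⁻¹ * Real.exp (Real.sqrt 2 * x))
      (Real.exp (Real.sqrt 2 * x)) x := by
  have h1 : HasDerivAt (fun x : ℝ => Real.sqrt 2 * x) (Real.sqrt 2) x := by
    simpa using (hasDerivAt_id x).const_mul (Real.sqrt 2)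
  have h := ((Real.hasDerivAt_exp (Real.sqrt 2 * x)).comp x h1).const_mul
    (Real.sqrt 2)⁻¹
  refine h.congr_deriv ?_
  have h0 : Real.sqrt 2 ≠ 0 := ne_of_gt sqrt2_pos
  field_simp


lemma sqrt2_inv_eq : (Real.sqrt 2)⁻¹ = Real.sqrt 2 / 2 := by
  have h0 : Real.sqrt 2 ≠ 0 := ne_of_gt sqrt2_pos
  field_simp
  rw [Real.sq_sqrt (by norm_num)]

lemma alg_u (s e F0 F1 F2 : ℝ) (hs : s * s = 2) (hs0 : s ≠ 0) :
    F0 * (s⁻¹ * e) - 2⁻¹ * (F2 * (s⁻¹ * e))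
      = -((2⁻¹ * F2 + s / 2 * F1) * (s⁻¹ * e) + (2⁻¹ * F1 + s / 2 * F0) * -e) := by
  have hi : s⁻¹ = s / 2 := by field_simp; linear_combination -hs
  rw [hi]
  linear_combination (F1 * e / 4) * hs

lemma alg_v (s e F0 F1 F2 : ℝ) (hs : s * s = 2) (hs0 : s ≠ 0) :
    F0 * (s⁻¹ * e) - 2⁻¹ * (F2 * (s⁻¹ * e))
      = (s / 2 * F1 - 2⁻¹ * F2) * (s⁻¹ * e) + (s / 2 * F0 - 2⁻¹ * F1) * e := by
  have hi : s⁻¹ = s / 2 := by field_simp; linear_combination -hs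
  rw [hi]
  linear_combination (-(F1 * e) / 4) * hs

lemma hasDerivAt_u (hp : 2 ≤ p) (x : ℝ) :
    HasDerivAt (fun x : ℝ =>
      -((2⁻¹ * (p * a * ((a * x + b) * |a * x + b| ^ (p - 2)))
          + Real.sqrt 2 / 2 * |a * x + b| ^ p)
        * ((Real.sqrt 2)⁻¹ * Real.exp (-(Real.sqrt 2 * x)))))
      (|a * x + b| ^ p * ((Real.sqrt 2)⁻¹ * Real.exp (-(Real.sqrt 2 * x)))
        - 2⁻¹ * (p * (p - 1) * a ^ 2 * |a * x + b| ^ (p - 2)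
          * ((Real.sqrt 2)⁻¹ * Real.exp (-(Real.sqrt 2 * x))))) x := by
  have hA := ((hasDerivAt_f1 a b hp x).const_mul 2⁻¹).add
    ((hasDerivAt_f0 a b hp x).const_mul (Real.sqrt 2 / 2))
  have h := (hA.mul (hasDerivAt_k x)).neg
  refine h.congr_deriv ?_
  simp only [Pi.add_apply]
  have := alg_u (Real.sqrt 2) (Real.exp (-(Real.sqrt 2 * x)))
    (|a * x + b| ^ p) (p * a * ((a * x + b) * |a * x + b| ^ (p - 2)))
    (p * (p - 1) * a ^ 2 * |a * x + b| ^ (p - 2)) sqrt2_sq (ne_of_gt sqrt2_pos)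
  linear_combination -this

lemma hasDerivAt_v (hp : 2 ≤ p) (x : ℝ) :
    HasDerivAt (fun x : ℝ =>
      (Real.sqrt 2 / 2 * |a * x + b| ^ p
          - 2⁻¹ * (p * a * ((a * x + b) * |a * x + b| ^ (p - 2))))
        * ((Real.sqrt 2)⁻¹ * Real.exp (Real.sqrt 2 * x)))
      (|a * x + b| ^ p * ((Real.sqrt 2)⁻¹ * Real.exp (Real.sqrt 2 * x))
        - 2⁻¹ * (p * (p - 1) * a ^ 2 * |a * x + b| ^ (p - 2)
          * ((Real.sqrt 2)⁻¹ * Real.exp (Real.sqrt 2 * x)))) x := by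
  have hA := ((hasDerivAt_f0 a b hp x).const_mul (Real.sqrt 2 / 2)).sub
    ((hasDerivAt_f1 a b hp x).const_mul 2⁻¹)
  have h := hA.mul (hasDerivAt_kneg x)
  refine h.congr_deriv ?_
  simp only [Pi.sub_apply]
  have := alg_v (Real.sqrt 2) (Real.exp (Real.sqrt 2 * x))
    (|a * x + b| ^ p) (p * a * ((a * x + b) * |a * x + b| ^ (p - 2)))
    (p * (p - 1) * a ^ 2 * |a * x + b| ^ (p - 2)) sqrt2_sq (ne_of_gt sqrt2_pos)
  linear_combination -this


lemma tendsto_T1 (hp : 2 ≤ p) :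
    Tendsto (fun x : ℝ => (a * x + b) * |a * x + b| ^ (p - 2)
      * Real.exp (-(Real.sqrt 2 * x))) atTop (𝓝 0) := by
  apply squeeze_zero_norm'
    (a := fun x : ℝ => |a * x + b| ^ (p - 1) * Real.exp (-(Real.sqrt 2 * x)))
  · filter_upwards with x
    have h : |(a * x + b) * |a * x + b| ^ (p - 2) * Real.exp (-(Real.sqrt 2 * x))|
        = (|a * x + b| * |a * x + b| ^ (p - 2)) * Real.exp (-(Real.sqrt 2 * x)) := by
      rw [abs_mul, abs_mul, abs_of_nonneg (Real.rpow_nonneg (abs_nonneg _) _),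
        abs_of_nonneg (Real.exp_pos _).le]
    rw [Real.norm_eq_abs, h, abs_mul_abs_rpow hp]
  · exact tendsto_aux a b (by linarith) sqrt2_pos

lemma tendsto_u_atTop (hp : 2 ≤ p) :
    Tendsto (fun x : ℝ =>
      -((2⁻¹ * (p * a * ((a * x + b) * |a * x + b| ^ (p - 2)))
          + Real.sqrt 2 / 2 * |a * x + b| ^ p)
        * ((Real.sqrt 2)⁻¹ * Real.exp (-(Real.sqrt 2 * x))))) atTop (𝓝 0) := by
  have h1 := (tendsto_T1 a b hp).const_mul (-(2⁻¹ * (p * a) * (Real.sqrt 2)⁻¹))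
  have h0 := (tendsto_aux a b (by linarith : (0:ℝ) ≤ p) sqrt2_pos).const_mul
    (-(Real.sqrt 2 / 2 * (Real.sqrt 2)⁻¹))
  have h := h1.add h0
  rw [mul_zero, mul_zero, add_zero] at h
  exact h.congr (fun x => by ring)

lemma tendsto_v_atBot (hp : 2 ≤ p) :
    Tendsto (fun x : ℝ =>
      (Real.sqrt 2 / 2 * |a * x + b| ^ p
          - 2⁻¹ * (p * a * ((a * x + b) * |a * x + b| ^ (p - 2))))
        * ((Real.sqrt 2)⁻¹ * Real.exp (Real.sqrt 2 * x))) atBot (𝓝 0) := by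
  have h1 := (tendsto_T1 (-a) b hp).const_mul (-(2⁻¹ * (p * a) * (Real.sqrt 2)⁻¹))
  have h0 := (tendsto_aux (-a) b (by linarith : (0:ℝ) ≤ p) sqrt2_pos).const_mul
    (Real.sqrt 2 / 2 * (Real.sqrt 2)⁻¹)
  have h := h0.add h1
  rw [mul_zero, mul_zero, add_zero] at h
  have hw : Tendsto (fun x : ℝ =>
      (Real.sqrt 2 / 2 * |a * (-x) + b| ^ p
          - 2⁻¹ * (p * a * ((a * (-x) + b) * |a * (-x) + b| ^ (p - 2))))
        * ((Real.sqrt 2)⁻¹ * Real.exp (Real.sqrt 2 * (-x)))) atTop (𝓝 0) := by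
    refine h.congr (fun x => ?_)
    simp only [neg_mul, mul_neg]
    ring
  have h2 := hw.comp tendsto_neg_atBot_atTop
  refine h2.congr (fun x => ?_)
  simp only [Function.comp_apply, neg_neg]

lemma integral_Ioi_eq (hp : 2 ≤ p) :
    ∫ x in Ioi (0:ℝ),
        (|a * x + b| ^ p * ((Real.sqrt 2)⁻¹ * Real.exp (-(Real.sqrt 2 * |x|)))
          - 2⁻¹ * (p * (p - 1) * a ^ 2 * |a * x + b| ^ (p - 2)
            * ((Real.sqrt 2)⁻¹ * Real.exp (-(Real.sqrt 2 * |x|)))))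
      = (2⁻¹ * (p * a * (b * |b| ^ (p - 2))) + Real.sqrt 2 / 2 * |b| ^ p)
          * (Real.sqrt 2)⁻¹ := by
  have hp0 : (0:ℝ) ≤ p := by linarith
  have hp2 : (0:ℝ) ≤ p - 2 := by linarith
  have hIabs : IntegrableOn (fun x : ℝ =>
      |a * x + b| ^ p * ((Real.sqrt 2)⁻¹ * Real.exp (-(Real.sqrt 2 * |x|)))
        - 2⁻¹ * (p * (p - 1) * a ^ 2 * |a * x + b| ^ (p - 2)
          * ((Real.sqrt 2)⁻¹ * Real.exp (-(Real.sqrt 2 * |x|))))) (Ioi 0) := by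
    have h2 : IntegrableOn (fun x : ℝ =>
        2⁻¹ * (p * (p - 1) * a ^ 2 * |a * x + b| ^ (p - 2)
          * ((Real.sqrt 2)⁻¹ * Real.exp (-(Real.sqrt 2 * |x|))))) (Ioi 0) :=
      ((integrableOn_Ioi_aux a b hp2).const_mul
        (2⁻¹ * (p * (p - 1) * a ^ 2))).congr
        (Filter.Eventually.of_forall fun x => by ring)
    exact (integrableOn_Ioi_aux a b hp0).sub h2
  have hEq : EqOn (fun x : ℝ =>
      |a * x + b| ^ p * ((Real.sqrt 2)⁻¹ * Real.exp (-(Real.sqrt 2 * |x|)))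
        - 2⁻¹ * (p * (p - 1) * a ^ 2 * |a * x + b| ^ (p - 2)
          * ((Real.sqrt 2)⁻¹ * Real.exp (-(Real.sqrt 2 * |x|)))))
      (fun x : ℝ =>
      |a * x + b| ^ p * ((Real.sqrt 2)⁻¹ * Real.exp (-(Real.sqrt 2 * x)))
        - 2⁻¹ * (p * (p - 1) * a ^ 2 * |a * x + b| ^ (p - 2)
          * ((Real.sqrt 2)⁻¹ * Real.exp (-(Real.sqrt 2 * x))))) (Ioi 0) := by
    intro x hx
    simp only [abs_of_pos (mem_Ioi.mp hx)]
  have hInt : IntegrableOn (fun x : ℝ =>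
      |a * x + b| ^ p * ((Real.sqrt 2)⁻¹ * Real.exp (-(Real.sqrt 2 * x)))
        - 2⁻¹ * (p * (p - 1) * a ^ 2 * |a * x + b| ^ (p - 2)
          * ((Real.sqrt 2)⁻¹ * Real.exp (-(Real.sqrt 2 * x))))) (Ioi 0) :=
    hIabs.congr_fun hEq measurableSet_Ioi
  have hFTC := integral_Ioi_of_hasDerivAt_of_tendsto' (a := 0)
    (fun x _ => hasDerivAt_u a b hp x) hInt (tendsto_u_atTop a b hp)
  rw [setIntegral_congr_fun measurableSet_Ioi hEq, hFTC]
  simp only [mul_zero, zero_add, neg_zero, Real.exp_zero, mul_one, zero_sub, neg_neg]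

lemma integral_Iic_eq (hp : 2 ≤ p) :
    ∫ x in Iic (0:ℝ),
        (|a * x + b| ^ p * ((Real.sqrt 2)⁻¹ * Real.exp (-(Real.sqrt 2 * |x|)))
          - 2⁻¹ * (p * (p - 1) * a ^ 2 * |a * x + b| ^ (p - 2)
            * ((Real.sqrt 2)⁻¹ * Real.exp (-(Real.sqrt 2 * |x|)))))
      = (Real.sqrt 2 / 2 * |b| ^ p - 2⁻¹ * (p * a * (b * |b| ^ (p - 2))))
          * (Real.sqrt 2)⁻¹ := by
  have hp0 : (0:ℝ) ≤ p := by linarith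
  have hp2 : (0:ℝ) ≤ p - 2 := by linarith
  have hIabs : IntegrableOn (fun x : ℝ =>
      |a * x + b| ^ p * ((Real.sqrt 2)⁻¹ * Real.exp (-(Real.sqrt 2 * |x|)))
        - 2⁻¹ * (p * (p - 1) * a ^ 2 * |a * x + b| ^ (p - 2)
          * ((Real.sqrt 2)⁻¹ * Real.exp (-(Real.sqrt 2 * |x|))))) (Iic 0) := by
    have h2 : Integrable (fun x : ℝ =>
        2⁻¹ * (p * (p - 1) * a ^ 2 * |a * x + b| ^ (p - 2)
          * ((Real.sqrt 2)⁻¹ * Real.exp (-(Real.sqrt 2 * |x|))))) :=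
      ((integrable_aux a b hp2).const_mul
        (2⁻¹ * (p * (p - 1) * a ^ 2))).congr
        (Filter.Eventually.of_forall fun x => by ring)
    exact ((integrable_aux a b hp0).sub h2).integrableOn
  have hEq : EqOn (fun x : ℝ =>
      |a * x + b| ^ p * ((Real.sqrt 2)⁻¹ * Real.exp (-(Real.sqrt 2 * |x|)))
        - 2⁻¹ * (p * (p - 1) * a ^ 2 * |a * x + b| ^ (p - 2)
          * ((Real.sqrt 2)⁻¹ * Real.exp (-(Real.sqrt 2 * |x|)))))
      (fun x : ℝ =>
      |a * x + b| ^ p * ((Real.sqrt 2)⁻¹ * Real.exp (Real.sqrt 2 * x))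
        - 2⁻¹ * (p * (p - 1) * a ^ 2 * |a * x + b| ^ (p - 2)
          * ((Real.sqrt 2)⁻¹ * Real.exp (Real.sqrt 2 * x)))) (Iic 0) := by
    intro x hx
    have : -(Real.sqrt 2 * |x|) = Real.sqrt 2 * x := by
      rw [abs_of_nonpos (mem_Iic.mp hx)]; ring
    simp only [this]
  have hInt : IntegrableOn (fun x : ℝ =>
      |a * x + b| ^ p * ((Real.sqrt 2)⁻¹ * Real.exp (Real.sqrt 2 * x))
        - 2⁻¹ * (p * (p - 1) * a ^ 2 * |a * x + b| ^ (p - 2)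
          * ((Real.sqrt 2)⁻¹ * Real.exp (Real.sqrt 2 * x)))) (Iic 0) :=
    hIabs.congr_fun hEq measurableSet_Iic
  have hFTC := integral_Iic_of_hasDerivAt_of_tendsto' (a := 0)
    (fun x _ => hasDerivAt_v a b hp x) hInt (tendsto_v_atBot a b hp)
  rw [setIntegral_congr_fun measurableSet_Iic hEq, hFTC]
  simp only [mul_zero, zero_add, Real.exp_zero, mul_one, sub_zero]

lemma key (hp : 2 ≤ p) :
    ∫ x : ℝ, |a * x + b| ^ p * ((Real.sqrt 2)⁻¹ * Real.exp (-(Real.sqrt 2 * |x|)))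
      = |b| ^ p + (p * (p - 1) / 2) * a ^ 2
        * ∫ x : ℝ, |a * x + b| ^ (p - 2)
            * ((Real.sqrt 2)⁻¹ * Real.exp (-(Real.sqrt 2 * |x|))) := by
  have hp0 : (0:ℝ) ≤ p := by linarith
  have hp2 : (0:ℝ) ≤ p - 2 := by linarith
  have hI0 := integrable_aux a b hp0
  have hI2 := integrable_aux a b hp2
  have hIc : Integrable (fun x : ℝ =>
      2⁻¹ * (p * (p - 1) * a ^ 2 * |a * x + b| ^ (p - 2)
        * ((Real.sqrt 2)⁻¹ * Real.exp (-(Real.sqrt 2 * |x|))))) :=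
    (hI2.const_mul (2⁻¹ * (p * (p - 1) * a ^ 2))).congr
      (Filter.Eventually.of_forall fun x => by ring)
  have hsub := hI0.sub hIc
  have hsplit := intervalIntegral.integral_Iic_add_Ioi (b := (0:ℝ)) hsub.integrableOn hsub.integrableOn
  simp only [Pi.sub_apply] at hsplit
  rw [integral_Iic_eq a b hp, integral_Ioi_eq a b hp] at hsplit
  rw [integral_sub hI0 hIc] at hsplit
  have hconst : (∫ x : ℝ, 2⁻¹ * (p * (p - 1) * a ^ 2 * |a * x + b| ^ (p - 2)
      * ((Real.sqrt 2)⁻¹ * Real.exp (-(Real.sqrt 2 * |x|)))))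
      = (2⁻¹ * (p * (p - 1) * a ^ 2)) * ∫ x : ℝ, |a * x + b| ^ (p - 2)
        * ((Real.sqrt 2)⁻¹ * Real.exp (-(Real.sqrt 2 * |x|))) := by
    rw [← MeasureTheory.integral_const_mul]
    congr 1
    funext x
    ring
  rw [hconst] at hsplit
  have hs1 : Real.sqrt 2 * (Real.sqrt 2)⁻¹ = 1 :=
    mul_inv_cancel₀ (ne_of_gt sqrt2_pos)
  have hLHS : (Real.sqrt 2 / 2 * |b| ^ p - 2⁻¹ * (p * a * (b * |b| ^ (p - 2))))
        * (Real.sqrt 2)⁻¹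
      + (2⁻¹ * (p * a * (b * |b| ^ (p - 2))) + Real.sqrt 2 / 2 * |b| ^ p)
        * (Real.sqrt 2)⁻¹ = |b| ^ p := by
    have : (Real.sqrt 2 / 2 * |b| ^ p - 2⁻¹ * (p * a * (b * |b| ^ (p - 2))))
        * (Real.sqrt 2)⁻¹
      + (2⁻¹ * (p * a * (b * |b| ^ (p - 2))) + Real.sqrt 2 / 2 * |b| ^ p)
        * (Real.sqrt 2)⁻¹ = (Real.sqrt 2 * (Real.sqrt 2)⁻¹) * |b| ^ p := by ring
    rw [this, hs1, one_mul]
  rw [hLHS] at hsplit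
  linarith [hsplit]

end Main

lemma transfer {Ω : Type*} [MeasurableSpace Ω] (μ : Measure Ω)
    (E : Ω → ℝ) (hEmeas : Measurable E) (hElaw : Measure.map E μ = symExpLaw)
    (a b q : ℝ) (hq : 0 ≤ q) :
    ∫ ω, |a * E ω + b| ^ q ∂μ
      = ∫ x : ℝ, |a * x + b| ^ q
          * ((Real.sqrt 2)⁻¹ * Real.exp (-(Real.sqrt 2 * |x|))) := by
  have hcont : Continuous (fun x : ℝ => |a * x + b| ^ q) :=
    (((continuous_const.mul continuous_id).add continuous_const).abs).rpow_const
      (fun x => Or.inr hq)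
  have hd : Continuous (fun x : ℝ =>
      (Real.sqrt 2)⁻¹ * Real.exp (-(Real.sqrt 2 * |x|))) :=
    continuous_const.mul ((continuous_const.mul continuous_abs).neg.rexp)
  rw [← integral_map hEmeas.aemeasurable hcont.aestronglyMeasurable, hElaw]
  unfold symExpLaw
  simp only [ENNReal.ofReal]
  rw [integral_withDensity_eq_integral_smul hd.measurable.real_toNNReal
    (fun x => |a * x + b| ^ q)]
  congr 1
  funext x
  rw [NNReal.smul_def, Real.coe_toNNReal _ (by positivity), smul_eq_mul]
  ring

end Stmt8Aux

/-- for `ℰ` symmetric exponential with variance 1, all reals `a, b` and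
`p ≥ 2`, `E|aℰ + b|^p = |b|^p + (p(p-1)/2) a² E|aℰ + b|^{p-2}`. -/
theorem stmt8
    {Ω : Type*} [MeasurableSpace Ω] (μ : Measure Ω) [IsProbabilityMeasure μ]
    (E : Ω → ℝ) (hEmeas : Measurable E) (hElaw : Measure.map E μ = symExpLaw)
    (a b : ℝ) (p : ℝ) (hp : 2 ≤ p) :
    ∫ ω, |a * E ω + b| ^ p ∂μ =
      |b| ^ p + (p * (p - 1) / 2) * a ^ 2 * ∫ ω, |a * E ω + b| ^ (p - 2) ∂μ := by
  rw [Stmt8Aux.transfer μ E hEmeas hElaw a b p (by linarith),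
    Stmt8Aux.transfer μ E hEmeas hElaw a b (p - 2) (by linarith)]
  exact Stmt8Aux.key a b hp
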